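/- For distinct primes p and q, the polynomial A = Φ_q(x)·Φ_p(x)^2·Φ_{pq}(x)·Φ_{p^2 q}(x)^2 (i.e., exponent vector (2,0,1,2) for the p^2 q case) has a negative coefficient; specifically, the coefficient of x^{2p−1} equals −p. -/

import Mathlib

open Polynomial

private lemma sumS' (m : ℕ) :
    ((X : ℤ[X]) - 1) ^ 2 * (∑ n ∈ Finset.range m, C ((n : ℤ) + 1) * X ^ n) =
      1 - C ((m : ℤ) + 1) * X ^ m + C (m : ℤ) * X ^ (m + 1) := by
  induction m with
  | zero => simp
  | succ m ih =>
    rw [Finset.sum_range_succ, mul_add, ih]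
    simp only [Nat.cast_add, Nat.cast_one, map_add, map_one]
    ring

private lemma dvd_mul_sub_mul' {R : Type*} [CommRing R] {d a a' b b' : R}
    (h1 : d ∣ a - a') (h2 : d ∣ b - b') : d ∣ a * b - a' * b' := by
  have h : a * b - a' * b' = (a - a') * b + a' * (b - b') := by ring
  rw [h]; exact dvd_add (h1.mul_right b) (h2.mul_left a')

theorem A2012_neg_coeff (p q : ℕ) (hp : p.Prime) (hq : q.Prime) (hpq : p ≠ q) :
    (∃ n : ℕ, (cyclotomic q ℤ * cyclotomic p ℤ ^ 2 * cyclotomic (p * q) ℤ *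
        cyclotomic (p ^ 2 * q) ℤ ^ 2).coeff n < 0) ∧
      (cyclotomic q ℤ * cyclotomic p ℤ ^ 2 * cyclotomic (p * q) ℤ *
        cyclotomic (p ^ 2 * q) ℤ ^ 2).coeff (2 * p - 1) = -(p : ℤ) := by
  haveI := Fact.mk hp
  haveI := Fact.mk hq
  have hp2 : 2 ≤ p := hp.two_le
  have hq2 : 2 ≤ q := hq.two_le
  have hqp : ¬ q ∣ p := fun h => hpq ((Nat.prime_dvd_prime_iff_eq hq hp).mp h).symm
  have hpdq : ¬ p ∣ q := fun h => hpq ((Nat.prime_dvd_prime_iff_eq hp hq).mp h)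
  -- cyclotomic product identities
  have e_p : cyclotomic p ℤ * (X - 1) = X ^ p - 1 := by
    rw [cyclotomic_prime]; exact geom_sum_mul X p
  have e_q : cyclotomic q ℤ * (X - 1) = X ^ q - 1 := by
    rw [cyclotomic_prime]; exact geom_sum_mul X q
  have e_pq : cyclotomic (p*q) ℤ * cyclotomic p ℤ * cyclotomic q ℤ * (X-1) = X^(p*q) - 1 := by
    have h := congrArg (expand ℤ q) e_p
    simp only [map_mul, map_sub, map_pow, map_one, expand_X] at h
    rw [cyclotomic_expand_eq_cyclotomic_mul hq hqp, ← pow_mul, mul_comm q p] at h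
    linear_combination h + cyclotomic (p*q) ℤ * cyclotomic p ℤ * e_q
  have e_p2 : cyclotomic (p^2) ℤ * cyclotomic p ℤ * (X-1) = X^(p^2) - 1 := by
    have h := congrArg (expand ℤ p) e_p
    simp only [map_mul, map_sub, map_pow, map_one, expand_X] at h
    rw [cyclotomic_expand_eq_cyclotomic hp dvd_rfl, ← pow_mul, ← pow_two] at h
    linear_combination h + cyclotomic (p^2) ℤ * e_p
  have e_p2q : cyclotomic (p^2*q) ℤ * cyclotomic (p^2) ℤ * cyclotomic (p*q) ℤ *
      cyclotomic q ℤ * cyclotomic p ℤ * (X-1) = X^(p^2*q) - 1 := by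
    have h := congrArg (expand ℤ p) e_pq
    simp only [map_mul, map_sub, map_pow, map_one, expand_X] at h
    rw [cyclotomic_expand_eq_cyclotomic hp (dvd_mul_right p q),
        cyclotomic_expand_eq_cyclotomic hp dvd_rfl,
        cyclotomic_expand_eq_cyclotomic_mul hp hpdq, ← pow_mul,
        show p*q*p = p^2*q by ring, show p*p = p^2 by ring, show q*p = p*q by ring,
        show p*(p*q) = p^2*q by ring] at h
    linear_combination h + (cyclotomic (p^2*q) ℤ * cyclotomic (p^2) ℤ * cyclotomic (p*q) ℤ *
      cyclotomic q ℤ) * e_p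
  set A : ℤ[X] := cyclotomic q ℤ * cyclotomic p ℤ ^ 2 * cyclotomic (p * q) ℤ *
      cyclotomic (p ^ 2 * q) ℤ ^ 2 with hAdef
  set Cc : ℤ[X] := (X - 1)^2 * (X^(p^2) - 1)^2 * (X^(p*q) - 1) with hCc
  set D : ℤ[X] := (X^(p^2*q) - 1)^2 * (X^p - 1)^3 with hD
  have key : A * Cc = D := by
    rw [hAdef, hCc, hD, ← e_p2q, ← e_p2, ← e_pq, ← e_p]
    ring
  -- the truncation G and its (X-1)^2-multiple H
  set G : ℤ[X] := (∑ n ∈ Finset.range (2*p), C ((n:ℤ)+1) * X^n) -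
      3 * (X^p * ∑ n ∈ Finset.range p, C ((n:ℤ)+1) * X^n) with hGdef
  set H : ℤ[X] := 1 - 3*X^p + (C (p:ℤ) + 2) * X^(2*p) - C (p:ℤ) * X^(2*p+1) with hHdef
  have hG : (X - 1)^2 * G = H := by
    have s1 := sumS' (2*p)
    have s2 := sumS' p
    simp only [Nat.cast_mul, Nat.cast_ofNat, map_add, map_mul, map_one, map_ofNat] at s1 s2
    rw [hGdef, hHdef]
    simp only [map_add, map_one]
    linear_combination s1 - (3*X^p) * s2
  -- divisibility facts modulo X^(2p)
  set d : ℤ[X] := X^(2*p) with hd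
  have hle1 : 2*p ≤ p^2 := by nlinarith
  have hle2 : 2*p ≤ p*q := by calc 2*p = p*2 := by ring
                                  _ ≤ p*q := Nat.mul_le_mul_left p hq2
  have hle3 : 2*p ≤ p^2*q := by nlinarith
  have dv1 : d ∣ (X^(p^2) - 1)^2 - 1 := by
    have h : ((X:ℤ[X])^(p^2) - 1)^2 - 1 = X^(p^2) * (X^(p^2) - 2) := by ring
    rw [h]; exact (pow_dvd_pow X hle1).mul_right _
  have dv2 : d ∣ (X^(p*q) - 1) - (-1) := by
    have h : ((X:ℤ[X])^(p*q) - 1) - (-1) = X^(p*q) := by ring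
    rw [h]; exact pow_dvd_pow X hle2
  have dv3 : d ∣ (X^(p^2*q) - 1)^2 - 1 := by
    have h : ((X:ℤ[X])^(p^2*q) - 1)^2 - 1 = X^(p^2*q) * (X^(p^2*q) - 2) := by ring
    rw [h]; exact (pow_dvd_pow X hle3).mul_right _
  have dv4 : d ∣ (X^p - 1)^3 - (3*X^p - 1) := by
    refine ⟨X^p - 3, ?_⟩; rw [hd]; ring
  have dv5 : d ∣ H - (1 - 3*X^p) := by
    refine ⟨(C (p:ℤ) + 2) - C (p:ℤ) * X, ?_⟩; rw [hHdef, hd]; ring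
  have hDGC : d ∣ D - G * Cc := by
    have hGCc : d ∣ G * Cc - (1 - 3*X^p) * 1 * (-1) := by
      have h : G * Cc = H * (X^(p^2) - 1)^2 * (X^(p*q) - 1) := by
        rw [← hG, hCc]; ring
      rw [h]
      exact dvd_mul_sub_mul' (dvd_mul_sub_mul' dv5 dv1) dv2
    have hDD : d ∣ D - 1 * (3*X^p - 1) := by
      rw [hD]; exact dvd_mul_sub_mul' dv3 dv4
    have h : D - G * Cc = (D - 1 * (3*X^p - 1)) - (G * Cc - (1 - 3*X^p) * 1 * (-1)) := by ring
    rw [h]; exact dvd_sub hDD hGCc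
  -- X does not divide Cc
  have hXCc : ¬ (X : ℤ[X]) ∣ Cc := by
    rw [X_dvd_iff, hCc, coeff_zero_eq_eval_zero]
    simp [zero_pow (pow_ne_zero 2 hp.ne_zero), zero_pow (mul_ne_zero hp.ne_zero hq.ne_zero),
      zero_pow hp.ne_zero]
  have hAG : d ∣ A - G := by
    have h1 : (A - G) * Cc = D - G * Cc := by rw [sub_mul, key]
    have h2 : d ∣ (A - G) * Cc := by rw [h1]; exact hDGC
    exact (prime_X (R := ℤ)).pow_dvd_of_dvd_mul_right (2*p) hXCc h2
  have hcoe : A.coeff (2*p-1) = G.coeff (2*p-1) := by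
    have h0 : (A - G).coeff (2*p-1) = 0 := X_pow_dvd_iff.mp hAG (2*p-1) (by omega)
    rw [coeff_sub] at h0; linarith
  -- compute G.coeff (2p-1)
  have hS1 : (∑ n ∈ Finset.range (2*p), C ((n:ℤ)+1) * X^n).coeff (2*p-1)
      = ((2*p-1 : ℕ) : ℤ) + 1 := by
    rw [finset_sum_coeff]
    simp only [coeff_C_mul, coeff_X_pow, mul_ite, mul_one, mul_zero]
    rw [Finset.sum_ite_eq (Finset.range (2*p)) (2*p-1) (fun n => ((n:ℤ)+1))]
    rw [if_pos (Finset.mem_range.mpr (by omega))]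
  have hS2 : ((X:ℤ[X])^p * ∑ n ∈ Finset.range p, C ((n:ℤ)+1) * X^n).coeff (2*p-1)
      = ((p-1 : ℕ) : ℤ) + 1 := by
    rw [show 2*p-1 = (p-1) + p by omega, coeff_X_pow_mul]
    rw [finset_sum_coeff]
    simp only [coeff_C_mul, coeff_X_pow, mul_ite, mul_one, mul_zero]
    rw [Finset.sum_ite_eq (Finset.range p) (p-1) (fun n => ((n:ℤ)+1))]
    rw [if_pos (Finset.mem_range.mpr (by omega))]
  have hGc : G.coeff (2*p-1) = -(p:ℤ) := by
    rw [hGdef, coeff_sub, hS1,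
      show (3 : ℤ[X]) = C (3:ℤ) from (map_ofNat C 3).symm, coeff_C_mul, hS2,
      Nat.cast_sub (by omega : 1 ≤ 2*p), Nat.cast_sub (by omega : 1 ≤ p)]
    push_cast
    ring
  refine ⟨⟨2*p-1, ?_⟩, ?_⟩
  · rw [hcoe, hGc]
    simp only [Left.neg_neg_iff, Int.natCast_pos]
    omega
  · rw [hcoe, hGc]
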